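/- arXiv:0904.1923 — 4 statements merged into one kernel-verified Lean document; each statement's English description precedes it below -/
import Mathlib

section
/- For every finite simple graph G = (V,E) and every pair of vertices v, w of G, one has G*v*w*v = G*w*v*w (the Seidel complementations are applied left to right). -/
universe u

/-- The Seidel complement of `G` at `v`: adjacency between the open neighborhood of `v`
and the set of vertices different from `v` and not adjacent to `v` is complemented,
all other adjacencies are unchanged. -/
def seidelCompl {V : Type u} (G : SimpleGraph V) (v : V) : SimpleGraph V where
  Adj x y := x ≠ y ∧
    Xor' (G.Adj x y)
      ((G.Adj v x ∧ ¬ G.Adj v y ∧ y ≠ v) ∨ (G.Adj v y ∧ ¬ G.Adj v x ∧ x ≠ v))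
  symm := ⟨by
    rintro x y ⟨hxy, h⟩
    refine ⟨hxy.symm, ?_⟩
    have h1 : G.Adj x y ↔ G.Adj y x := G.adj_comm x y
    unfold Xor' at h ⊢
    rw [xor_def] at h ⊢
    tauto⟩
  loopless := ⟨fun x h => h.1 rfl⟩

set_option maxHeartbeats 40000000 in
/-- Auxiliary: the triple Seidel complement identity. -/
lemma seidelCompl_triple_comm_aux {V : Type u} (G : SimpleGraph V) (v w : V) :
    seidelCompl (seidelCompl (seidelCompl G v) w) v =
      seidelCompl (seidelCompl (seidelCompl G w) v) w := by
  by_cases hvw : v = w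
  · subst hvw; rfl
  ext x y
  have hv : ¬ G.Adj v v := G.irrefl
  have hw : ¬ G.Adj w w := G.irrefl
  simp only [seidelCompl, Xor', ne_eq]
  by_cases hxy : x = y
  · simp [hxy]
  by_cases hxv : x = v <;> by_cases hyv : y = v <;> by_cases hxw : x = w <;> by_cases hyw : y = w <;>
  by_cases h1 : G.Adj x y <;> by_cases h2 : G.Adj v x <;> by_cases h3 : G.Adj v y <;>
    by_cases h4 : G.Adj w x <;> by_cases h5 : G.Adj w y <;> by_cases h6 : G.Adj v w <;>
    simp_all [ne_comm, SimpleGraph.adj_comm]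

/-- `G*v*w*v = G*w*v*w` for every pair of vertices `v, w`. -/
theorem seidelCompl_triple_comm {V : Type u} [Fintype V] (G : SimpleGraph V) (v w : V) :
    seidelCompl (seidelCompl (seidelCompl G v) w) v =
      seidelCompl (seidelCompl (seidelCompl G w) v) w :=
  seidelCompl_triple_comm_aux G v w
end

section
/- Let G = (V,E) be a finite simple graph and v a vertex of G. Then G is prime with respect to modular decomposition if and only if G*v is prime with respect to modular decomposition. -/
universe u

/-- `M` is a module of `G`: every vertex outside `M` is adjacent either to all
vertices of `M` or to none of them. -/
def IsModule {V : Type u} (G : SimpleGraph V) (M : Set V) : Prop :=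
  ∀ z ∉ M, (∀ m ∈ M, G.Adj z m) ∨ (∀ m ∈ M, ¬ G.Adj z m)

/-- `G` is prime w.r.t. modular decomposition: every module is trivial. -/
def IsPrime {V : Type u} (G : SimpleGraph V) : Prop :=
  ∀ M : Set V, IsModule G M → M = ∅ ∨ (∃ x, M = {x}) ∨ M = Set.univ

lemma seidel_adj_same {V : Type u} {G : SimpleGraph V} {v z m : V}
    (h : G.Adj v z ↔ G.Adj v m) :
    (seidelCompl G v).Adj z m ↔ G.Adj z m := by
  have hne : G.Adj z m → z ≠ m := fun ha => G.ne_of_adj ha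
  simp only [seidelCompl, Xor', xor_def]
  tauto

lemma seidel_adj_diff {V : Type u} {G : SimpleGraph V} {v z m : V}
    (hz : z ≠ v) (hm : m ≠ v) (h : ¬ (G.Adj v z ↔ G.Adj v m)) :
    (seidelCompl G v).Adj z m ↔ ¬ G.Adj z m := by
  have hne : z ≠ m := by
    rintro rfl; exact h Iff.rfl
  simp only [seidelCompl, Xor', xor_def]
  tauto

lemma seidel_adj_v {V : Type u} (G : SimpleGraph V) (v x : V) :
    (seidelCompl G v).Adj v x ↔ G.Adj v x := by
  have h0 : ¬ G.Adj v v := G.loopless.irrefl v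
  have hne : G.Adj v x → v ≠ x := fun h => G.ne_of_adj h
  have hvv : ¬ (v ≠ v) := fun h => h rfl
  simp only [seidelCompl, Xor', xor_def]
  tauto

lemma seidel_invol {V : Type u} (G : SimpleGraph V) (v : V) :
    seidelCompl (seidelCompl G v) v = G := by
  ext x y
  by_cases hxv : x = v
  · subst hxv
    rw [seidel_adj_v, seidel_adj_v]
  by_cases hyv : y = v
  · rw [(seidelCompl (seidelCompl G v) v).adj_comm, G.adj_comm, hyv,
      seidel_adj_v, seidel_adj_v]
  by_cases h : G.Adj v x ↔ G.Adj v y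
  · have h' : (seidelCompl G v).Adj v x ↔ (seidelCompl G v).Adj v y := by
      rw [seidel_adj_v, seidel_adj_v]; exact h
    rw [seidel_adj_same h', seidel_adj_same h]
  · have h' : ¬ ((seidelCompl G v).Adj v x ↔ (seidelCompl G v).Adj v y) := by
      rw [seidel_adj_v, seidel_adj_v]; exact h
    rw [seidel_adj_diff hxv hyv h', seidel_adj_diff hxv hyv h, not_not]

/-- If `v ∉ M` then a module of `G` is also a module of `G*v`. -/
lemma isModule_seidel_of_not_mem {V : Type u} {G : SimpleGraph V} {v : V} {M : Set V}
    (hv : v ∉ M) (hM : IsModule G M) : IsModule (seidelCompl G v) M := by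
  intro z hz
  by_cases hzv : z = v
  · subst hzv
    rcases hM z hz with h | h
    · exact Or.inl fun m hm => (seidel_adj_v G z m).mpr (h m hm)
    · exact Or.inr fun m hm => fun ha => h m hm ((seidel_adj_v G z m).mp ha)
  · -- v ∉ M, so v is uniform to M
    rcases hM v hv with hvAll | hvNone
    · by_cases hzN : G.Adj v z
      · -- z and every m ∈ M are on the same side of N(v)
        rcases hM z hz with h | h
        · exact Or.inl fun m hm => (seidel_adj_same (iff_of_true hzN (hvAll m hm))).mpr (h m hm)
        · exact Or.inr fun m hm ha => h m hm ((seidel_adj_same (iff_of_true hzN (hvAll m hm))).mp ha)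
      · -- z not a neighbor of v, all of M is: flip
        rcases hM z hz with h | h
        · refine Or.inr fun m hm ha => ?_
          have := (seidel_adj_diff hzv (fun hmv => hv (hmv ▸ hm))
            (by simp [hzN, hvAll m hm])).mp ha
          exact this (h m hm)
        · refine Or.inl fun m hm => ?_
          exact (seidel_adj_diff hzv (fun hmv => hv (hmv ▸ hm))
            (by simp [hzN, hvAll m hm])).mpr (h m hm)
    · by_cases hzN : G.Adj v z
      · rcases hM z hz with h | h
        · refine Or.inr fun m hm ha => ?_
          have := (seidel_adj_diff hzv (fun hmv => hv (hmv ▸ hm))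
            (by simp [hzN, hvNone m hm])).mp ha
          exact this (h m hm)
        · refine Or.inl fun m hm => ?_
          exact (seidel_adj_diff hzv (fun hmv => hv (hmv ▸ hm))
            (by simp [hzN, hvNone m hm])).mpr (h m hm)
      · rcases hM z hz with h | h
        · exact Or.inl fun m hm =>
            (seidel_adj_same (iff_of_false hzN (hvNone m hm))).mpr (h m hm)
        · exact Or.inr fun m hm ha => h m hm
            ((seidel_adj_same (iff_of_false hzN (hvNone m hm))).mp ha)

/-- If `v ∈ M` then `Mᶜ ∪ {v}` is a module of `G*v`. -/
lemma isModule_seidel_of_mem {V : Type u} {G : SimpleGraph V} {v : V} {M : Set V}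
    (hv : v ∈ M) (hM : IsModule G M) : IsModule (seidelCompl G v) (Mᶜ ∪ {v}) := by
  intro z hz
  have hzM : z ∈ M := by
    by_contra h
    exact hz (Or.inl h)
  have hzv : z ≠ v := by
    rintro rfl
    exact hz (Or.inr rfl)
  by_cases hzN : G.Adj v z
  · refine Or.inl ?_
    rintro m (hm | hm)
    · -- m ∈ Mᶜ
      have hmv : m ≠ v := fun h => hm (h ▸ hv)
      rcases hM m hm with h | h
      · -- m adjacent to all of M, in particular to v and z : same side
        exact (seidel_adj_same (iff_of_true hzN ((G.adj_comm m v).mp (h v hv)))).mpr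
          ((G.adj_comm m z).mp (h z hzM))
      · -- m adjacent to nothing in M : different side, flip non-edge to edge
        have hvm : ¬ G.Adj v m := fun ha => h v hv ((G.adj_comm v m).mp ha)
        exact (seidel_adj_diff hzv hmv (by simp [hzN, hvm])).mpr
          (fun ha => h z hzM ((G.adj_comm z m).mp ha))
    · -- m = v
      have hmv : m = v := hm
      rw [hmv, (seidelCompl G v).adj_comm]
      exact (seidel_adj_v G v z).mpr hzN
  · refine Or.inr ?_
    rintro m (hm | hm)
    · have hmv : m ≠ v := fun h => hm (h ▸ hv)
      rcases hM m hm with h | h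
      · -- m adjacent to all of M : different side from z, flip edge to non-edge
        intro ha
        have hvm : G.Adj v m := (G.adj_comm m v).mp (h v hv)
        exact ((seidel_adj_diff hzv hmv (by simp [hzN, hvm])).mp ha)
          ((G.adj_comm m z).mp (h z hzM))
      · -- m adjacent to nothing in M : same side (both non-neighbors)
        intro ha
        exact h z hzM ((G.adj_comm z m).mp
          ((seidel_adj_same (iff_of_false hzN
            (fun hb => h v hv ((G.adj_comm v m).mp hb)))).mp ha))
    · have hmv : m = v := hm
      rw [hmv, (seidelCompl G v).adj_comm]
      intro ha
      exact hzN ((seidel_adj_v G v z).mp ha)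

lemma isPrime_of_isPrime_seidel {V : Type u} (G : SimpleGraph V) (v : V)
    (hp : IsPrime (seidelCompl G v)) : IsPrime G := by
  intro M hM
  by_cases hv : v ∈ M
  · rcases hp (Mᶜ ∪ {v}) (isModule_seidel_of_mem hv hM) with h | ⟨x, h⟩ | h
    · exfalso
      have : v ∈ Mᶜ ∪ {v} := Or.inr rfl
      rw [h] at this
      exact this
    · -- Mᶜ ∪ {v} = {x}; since v is in it, x = v and Mᶜ ⊆ {v}, but v ∈ M so Mᶜ = ∅
      right; right
      have hvx : v = x := by
        have : v ∈ Mᶜ ∪ {v} := Or.inr rfl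
        rwa [h] at this
      subst hvx
      ext y
      simp only [Set.mem_univ, iff_true]
      by_contra hy
      have : y ∈ Mᶜ ∪ {v} := Or.inl hy
      rw [h] at this
      exact hy (this ▸ hv)
    · -- Mᶜ ∪ {v} = univ : M ⊆ {v}, so M = {v}
      right; left
      refine ⟨v, ?_⟩
      ext y
      simp only [Set.mem_singleton_iff]
      constructor
      · intro hy
        have : y ∈ Mᶜ ∪ {v} := by rw [h]; trivial
        rcases this with h' | h'
        · exact absurd hy h'
        · exact h'
      · rintro rfl; exact hv
  · exact hp M (isModule_seidel_of_not_mem hv hM)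

/-- `G` is prime w.r.t. modular decomposition iff `G*v` is. -/
theorem isPrime_seidelCompl_iff {V : Type u} [Fintype V] (G : SimpleGraph V) (v : V) :
    IsPrime G ↔ IsPrime (seidelCompl G v) := by
  constructor
  · intro h
    have := isPrime_of_isPrime_seidel (seidelCompl G v) v
    rw [seidel_invol] at this
    exact this h
  · exact isPrime_of_isPrime_seidel G v
end

section
/- Let G = (V,E) be a finite simple permutation graph and v a vertex of G. Then G*v is a permutation graph. -/
universe u

set_option maxHeartbeats 1000000

section Cut

variable {V : Type u}


variable {V : Type u}

/-- Cut the order at `v` and swap the two sides. -/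
def cutOrder (O : LinearOrder V) (v : V) : LinearOrder V :=
  letI := O
  LinearOrder.lift' (fun u => toLex ((if O.lt v u then 0 else if u = v then 1 else 2 : ℕ), u))
    (fun _ _ hab => congrArg (fun p => (ofLex p).2) hab)

lemma cutOrder_lt (O : LinearOrder V) (v u w : V) :
    (cutOrder O v).lt u w ↔
      ((if O.lt v u then 0 else if u = v then 1 else 2 : ℕ) <
        (if O.lt v w then 0 else if w = v then 1 else 2 : ℕ)) ∨
      ((if O.lt v u then 0 else if u = v then 1 else 2 : ℕ) =
        (if O.lt v w then 0 else if w = v then 1 else 2 : ℕ) ∧ O.lt u w) := by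
  letI := O
  exact Prod.Lex.lt_iff

lemma cutOrder_lt_of_ne (O : LinearOrder V) (v u w : V) (hu : u ≠ v) (hw : w ≠ v) :
    (cutOrder O v).lt u w ↔ Xor' (O.lt u w) (¬ (O.lt v u ↔ O.lt v w)) := by
  letI := O
  rw [cutOrder_lt]
  rcases lt_trichotomy v u with h1 | h1 | h1
  · rcases lt_trichotomy v w with h2 | h2 | h2
    · rw [if_pos h1, if_pos h2]
      simp [Xor', xor_def, h1, h2]
    · exact absurd h2.symm hw
    · rw [if_pos h1, if_neg (asymm h2), if_neg hw]
      have hlt : O.lt w u := h2.trans h1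
      simp [Xor', h1, asymm h2, asymm hlt]
  · exact absurd h1.symm hu
  · rcases lt_trichotomy v w with h2 | h2 | h2
    · rw [if_neg (asymm h1), if_neg hu, if_pos h2]
      have hlt : O.lt u w := h1.trans h2
      simp [Xor', asymm h1, h2, hlt]
    · exact absurd h2.symm hw
    · rw [if_neg (asymm h1), if_neg hu, if_neg (asymm h2), if_neg hw]
      simp [Xor', xor_def, asymm h1, asymm h2]

lemma cutOrder_lt_left (O : LinearOrder V) (v w : V) (hw : w ≠ v) :
    (cutOrder O v).lt v w ↔ O.lt w v := by
  letI := O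
  rw [cutOrder_lt, if_neg (lt_irrefl v), if_pos rfl]
  rcases lt_trichotomy v w with h2 | h2 | h2
  · rw [if_pos h2]
    simp [asymm h2]
  · exact absurd h2.symm hw
  · rw [if_neg (asymm h2), if_neg hw]
    simp [h2]

lemma cutOrder_lt_right (O : LinearOrder V) (v w : V) (hw : w ≠ v) :
    (cutOrder O v).lt w v ↔ O.lt v w := by
  letI := O
  rw [cutOrder_lt, if_neg (lt_irrefl v), if_pos rfl]
  rcases lt_trichotomy v w with h2 | h2 | h2
  · rw [if_pos h2]
    simp [h2]
  · exact absurd h2.symm hw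
  · rw [if_neg (asymm h2), if_neg hw]
    simp [asymm h2]

lemma lt_iff_not_lt_of_ne (O : LinearOrder V) {u w : V} (huw : u ≠ w) :
    O.lt u w ↔ ¬ O.lt w u := by
  letI := O
  constructor
  · exact fun h => asymm h
  · intro h
    rcases lt_trichotomy u w with h' | h' | h'
    · exact h'
    · exact absurd h' huw
    · exact absurd h' h

end Cut


/-- A permutation graph: there are two linear orders on the vertices such that two
distinct vertices are adjacent iff the two orders disagree on them. -/
def IsPermutationGraph {V : Type u} (G : SimpleGraph V) : Prop :=
  ∃ O₁ O₂ : LinearOrder V, ∀ u w : V, u ≠ w →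
    (G.Adj u w ↔ ((O₁.lt u w ∧ O₂.lt w u) ∨ (O₁.lt w u ∧ O₂.lt u w)))

/-- Permutation graphs are closed under Seidel complementation. -/
theorem isPermutationGraph_seidelCompl {V : Type u} [Fintype V] (G : SimpleGraph V)
    (hG : IsPermutationGraph G) (v : V) : IsPermutationGraph (seidelCompl G v) := by
  obtain ⟨O₁, O₂, h⟩ := hG
  refine ⟨cutOrder O₁ v, cutOrder O₂ v, ?_⟩
  intro u w huw
  show (u ≠ w ∧ Xor' (G.Adj u w)
      ((G.Adj v u ∧ ¬ G.Adj v w ∧ w ≠ v) ∨ (G.Adj v w ∧ ¬ G.Adj v u ∧ u ≠ v))) ↔ _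
  by_cases hu : u = v
  · subst hu
    have hGu : ¬ G.Adj u u := G.loopless.irrefl u
    have hw : w ≠ u := huw.symm
    rw [cutOrder_lt_left O₁ u w hw, cutOrder_lt_left O₂ u w hw,
        cutOrder_lt_right O₁ u w hw, cutOrder_lt_right O₂ u w hw]
    rw [h u w huw]
    simp only [hGu, false_and, and_false, false_or, or_false, Xor', xor_def]
    tauto
  · by_cases hw : w = v
    · subst hw
      have hGw : ¬ G.Adj w w := G.loopless.irrefl w
      rw [cutOrder_lt_left O₁ w u hu, cutOrder_lt_left O₂ w u hu,
          cutOrder_lt_right O₁ w u hu, cutOrder_lt_right O₂ w u hu]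
      rw [h u w huw]
      simp only [hGw, false_and, and_false, false_or, or_false, Xor', xor_def]
      tauto
    · -- both different from v
      rw [cutOrder_lt_of_ne O₁ v u w hu hw, cutOrder_lt_of_ne O₁ v w u hw hu,
          cutOrder_lt_of_ne O₂ v u w hu hw, cutOrder_lt_of_ne O₂ v w u hw hu]
      rw [h u w huw, h v u (Ne.symm hu), h v w (Ne.symm hw)]
      have e1 : O₁.lt u w ↔ ¬ O₁.lt w u := lt_iff_not_lt_of_ne O₁ huw
      have e2 : O₂.lt u w ↔ ¬ O₂.lt w u := lt_iff_not_lt_of_ne O₂ huw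
      have e3 : O₁.lt v u ↔ ¬ O₁.lt u v := lt_iff_not_lt_of_ne O₁ (Ne.symm hu)
      have e4 : O₂.lt v u ↔ ¬ O₂.lt u v := lt_iff_not_lt_of_ne O₂ (Ne.symm hu)
      have e5 : O₁.lt v w ↔ ¬ O₁.lt w v := lt_iff_not_lt_of_ne O₁ (Ne.symm hw)
      have e6 : O₂.lt v w ↔ ¬ O₂.lt w v := lt_iff_not_lt_of_ne O₂ (Ne.symm hw)
      have e1 : O₁.lt u w ↔ ¬ O₁.lt w u := lt_iff_not_lt_of_ne O₁ huw
      have e2 : O₂.lt u w ↔ ¬ O₂.lt w u := lt_iff_not_lt_of_ne O₂ huw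
      have e3 : O₁.lt v u ↔ ¬ O₁.lt u v := lt_iff_not_lt_of_ne O₁ (Ne.symm hu)
      have e4 : O₂.lt v u ↔ ¬ O₂.lt u v := lt_iff_not_lt_of_ne O₂ (Ne.symm hu)
      have e5 : O₁.lt v w ↔ ¬ O₁.lt w v := lt_iff_not_lt_of_ne O₁ (Ne.symm hw)
      have e6 : O₂.lt v w ↔ ¬ O₂.lt w v := lt_iff_not_lt_of_ne O₂ (Ne.symm hw)
      rw [e1, e2, e3, e4, e5, e6]
      simp only [Xor', hu, hw, huw, ne_eq, not_false_iff, and_true]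
      generalize O₁.lt w u = A
      generalize O₂.lt w u = B
      generalize O₁.lt u v = C
      generalize O₂.lt u v = D
      generalize O₁.lt w v = P
      generalize O₂.lt w v = Q
      clear * -
      by_cases A <;> by_cases B <;> by_cases C <;> by_cases D <;>
        by_cases P <;> by_cases Q <;> simp_all
end

section
/- Let T be a tournament on a finite vertex set V and let v be a vertex of T. Then T is prime with respect to modular decomposition if and only if the tournament T*v is prime with respect to modular decomposition. -/
universe u

/-- `r` is a tournament: irreflexive, and for distinct vertices exactly one of the two
opposite arcs is present. -/
def IsTournament {V : Type u} (r : V → V → Prop) : Prop :=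
  (∀ x, ¬ r x x) ∧ ∀ x y : V, x ≠ y → (r x y ↔ ¬ r y x)

/-- The Seidel complement of a tournament at `v`: every arc between `N⁺(v)` and `N⁻(v)`
is reversed, and every arc incident to `v` is reversed; all other arcs are unchanged. -/
def tournSeidel {V : Type u} (r : V → V → Prop) (v : V) (x y : V) : Prop :=
  ((x = v ∨ y = v ∨ (r v x ∧ r y v) ∨ (r v y ∧ r x v)) ∧ r y x) ∨
  (¬ (x = v ∨ y = v ∨ (r v x ∧ r y v) ∨ (r v y ∧ r x v)) ∧ r x y)

/-- `M` is a module of the tournament `r`. -/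
def TournIsModule {V : Type u} (r : V → V → Prop) (M : Set V) : Prop :=
  ∀ z ∉ M, (∀ m ∈ M, r z m) ∨ (∀ m ∈ M, r m z)

/-- The tournament `r` is prime w.r.t. modular decomposition: every module is trivial. -/
def TournIsPrime {V : Type u} (r : V → V → Prop) : Prop :=
  ∀ M : Set V, TournIsModule r M → M = ∅ ∨ (∃ x, M = {x}) ∨ M = Set.univ

section SeidelHelpers

variable {V : Type u} {r : V → V → Prop} {v : V}

lemma tourn_total (hT : IsTournament r) {x y : V} (h : x ≠ y) : r x y ∨ r y x := by
  by_cases h1 : r x y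
  · exact Or.inl h1
  · exact Or.inr ((hT.2 y x h.symm).mpr h1)

lemma seidel_at_left (y : V) : tournSeidel r v v y ↔ r y v := by
  unfold tournSeidel; tauto

lemma seidel_at_right (x : V) : tournSeidel r v x v ↔ r v x := by
  unfold tournSeidel; tauto

lemma seidel_same (hT : IsTournament r) {x y : V} (hx : r v x) (hy : r v y) :
    tournSeidel r v x y ↔ r x y := by
  have hxv : x ≠ v := fun h => hT.1 v (h ▸ hx)
  have hyv : y ≠ v := fun h => hT.1 v (h ▸ hy)
  have h1 : ¬ r y v := fun h => (hT.2 y v hyv).mp h hy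
  have h2 : ¬ r x v := fun h => (hT.2 x v hxv).mp h hx
  unfold tournSeidel; tauto

lemma seidel_same2 (hT : IsTournament r) {x y : V} (hx : r x v) (hy : r y v) :
    tournSeidel r v x y ↔ r x y := by
  have hxv : x ≠ v := fun h => hT.1 v (h ▸ hx)
  have hyv : y ≠ v := fun h => hT.1 v (h ▸ hy)
  have h1 : ¬ r v y := fun h => (hT.2 y v hyv).mp hy h
  have h2 : ¬ r v x := fun h => (hT.2 x v hxv).mp hx h
  unfold tournSeidel; tauto

lemma seidel_cross (hT : IsTournament r) {x y : V} (hx : r v x) (hy : r y v) :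
    tournSeidel r v x y ↔ r y x := by
  unfold tournSeidel; tauto

lemma seidel_cross2 (hT : IsTournament r) {x y : V} (hx : r x v) (hy : r v y) :
    tournSeidel r v x y ↔ r y x := by
  unfold tournSeidel; tauto

lemma seidel_of_cond {x y : V}
    (hC : x = v ∨ y = v ∨ (r v x ∧ r y v) ∨ (r v y ∧ r x v)) :
    tournSeidel r v x y ↔ r y x := by
  unfold tournSeidel; tauto

lemma seidel_of_not_cond {x y : V}
    (hC : ¬(x = v ∨ y = v ∨ (r v x ∧ r y v) ∨ (r v y ∧ r x v))) :
    tournSeidel r v x y ↔ r x y := by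
  unfold tournSeidel; tauto

lemma isTournament_seidel (hT : IsTournament r) (v : V) :
    IsTournament (tournSeidel r v) := by
  constructor
  · intro x h
    rcases h with ⟨_, h⟩ | ⟨_, h⟩ <;> exact hT.1 x h
  · intro x y hxy
    have h1 := hT.2 x y hxy
    have h2 := hT.2 y x hxy.symm
    by_cases hC : (x = v ∨ y = v ∨ (r v x ∧ r y v) ∨ (r v y ∧ r x v))
    · have hC' : (y = v ∨ x = v ∨ (r v y ∧ r x v) ∨ (r v x ∧ r y v)) := by tauto
      rw [seidel_of_cond hC, seidel_of_cond hC']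
      tauto
    · have hC' : ¬(y = v ∨ x = v ∨ (r v y ∧ r x v) ∨ (r v x ∧ r y v)) := by tauto
      rw [seidel_of_not_cond hC, seidel_of_not_cond hC']
      exact h1

lemma seidel_involutive (hT : IsTournament r) (v : V) :
    tournSeidel (tournSeidel r v) v = r := by
  have hS := isTournament_seidel hT v
  funext x y
  apply propext
  by_cases hx : x = v
  · subst hx
    rw [seidel_at_left, seidel_at_right]
  by_cases hy : y = v
  · subst hy
    rw [seidel_at_right, seidel_at_left]
  rcases tourn_total hT (Ne.symm hx) with hvx | hxv
  · rcases tourn_total hT (Ne.symm hy) with hvy | hyv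
    · -- both in A of r; in B of S
      have hx' : tournSeidel r v x v := (seidel_at_right x).mpr hvx
      have hy' : tournSeidel r v y v := (seidel_at_right y).mpr hvy
      rw [seidel_same2 hS hx' hy', seidel_same hT hvx hvy]
    · -- x in A, y in B of r
      have hx' : tournSeidel r v x v := (seidel_at_right x).mpr hvx
      have hy' : tournSeidel r v v y := (seidel_at_left y).mpr hyv
      rw [seidel_cross2 hS hx' hy', seidel_cross2 hT hyv hvx]
  · rcases tourn_total hT (Ne.symm hy) with hvy | hyv
    · have hx' : tournSeidel r v v x := (seidel_at_left x).mpr hxv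
      have hy' : tournSeidel r v y v := (seidel_at_right y).mpr hvy
      rw [seidel_cross hS hx' hy', seidel_cross hT hvy hxv]
    · have hx' : tournSeidel r v v x := (seidel_at_left x).mpr hxv
      have hy' : tournSeidel r v v y := (seidel_at_left y).mpr hyv
      rw [seidel_same hS hx' hy', seidel_same2 hT hxv hyv]

lemma module_transfer (hT : IsTournament r) (v : V) {M : Set V}
    (hM : TournIsModule r M) {a b : V} (ha : a ∈ M) (hb : b ∈ M) (hab : a ≠ b)
    (hMu : M ≠ Set.univ) :
    ∃ M', TournIsModule (tournSeidel r v) M' ∧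
      (∃ a' ∈ M', ∃ b' ∈ M', a' ≠ b') ∧ M' ≠ Set.univ := by
  by_cases hv : v ∈ M
  · -- take the complement together with v
    refine ⟨Mᶜ ∪ {v}, ?_, ?_, ?_⟩
    · intro z hz
      have hzM : z ∈ M := by
        by_contra h; exact hz (Or.inl h)
      have hzv : z ≠ v := by
        intro h; exact hz (Or.inr h)
      rcases tourn_total hT (Ne.symm hzv) with hvz | hzv'
      · left
        intro w hw
        rcases hw with hwC | hwv
        · rcases hM w hwC with h1 | h1
          · exact (seidel_cross hT hvz (h1 v hv)).mpr (h1 z hzM)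
          · exact (seidel_same hT hvz (h1 v hv)).mpr (h1 z hzM)
        · rw [Set.mem_singleton_iff] at hwv
          subst hwv
          exact (seidel_at_right z).mpr hvz
      · right
        intro w hw
        rcases hw with hwC | hwv
        · rcases hM w hwC with h1 | h1
          · exact (seidel_same2 hT (h1 v hv) hzv').mpr (h1 z hzM)
          · exact (seidel_cross hT (h1 v hv) hzv').mpr (h1 z hzM)
        · rw [Set.mem_singleton_iff] at hwv
          subst hwv
          exact (seidel_at_left z).mpr hzv'
    · -- two distinct elements: v and some w ∉ M
      have : ∃ w, w ∉ M := by
        by_contra h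
        push_neg at h
        exact hMu (Set.eq_univ_of_forall h)
      obtain ⟨w, hw⟩ := this
      refine ⟨v, Or.inr rfl, w, Or.inl hw, ?_⟩
      intro h; exact hw (h ▸ hv)
    · -- not univ: some element of M other than v is missing
      have hc : ∃ c ∈ M, c ≠ v := by
        by_cases hav : a = v
        · exact ⟨b, hb, by rw [← hav]; exact hab.symm⟩
        · exact ⟨a, ha, hav⟩
      obtain ⟨c, hcM, hcv⟩ := hc
      intro h
      have : c ∈ Mᶜ ∪ {v} := h ▸ Set.mem_univ c
      rcases this with h1 | h1
      · exact h1 hcM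
      · exact hcv h1
  · -- v ∉ M : M itself is a module of the Seidel complement
    rcases hM v hv with hA | hB
    · refine ⟨M, ?_, ⟨a, ha, b, hb, hab⟩, hMu⟩
      intro z hz
      by_cases hzv : z = v
      · subst hzv
        right; intro m hm
        exact (seidel_at_right m).mpr (hA m hm)
      rcases hM z hz with h1 | h1
      · rcases tourn_total hT (Ne.symm hzv) with hvz | hzv'
        · left; intro m hm
          exact (seidel_same hT hvz (hA m hm)).mpr (h1 m hm)
        · right; intro m hm
          exact (seidel_cross hT (hA m hm) hzv').mpr (h1 m hm)
      · rcases tourn_total hT (Ne.symm hzv) with hvz | hzv'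
        · right; intro m hm
          exact (seidel_same hT (hA m hm) hvz).mpr (h1 m hm)
        · left; intro m hm
          exact (seidel_cross2 hT hzv' (hA m hm)).mpr (h1 m hm)
    · refine ⟨M, ?_, ⟨a, ha, b, hb, hab⟩, hMu⟩
      intro z hz
      by_cases hzv : z = v
      · subst hzv
        left; intro m hm
        exact (seidel_at_left m).mpr (hB m hm)
      rcases hM z hz with h1 | h1
      · rcases tourn_total hT (Ne.symm hzv) with hvz | hzv'
        · right; intro m hm
          exact (seidel_cross2 hT (hB m hm) hvz).mpr (h1 m hm)
        · left; intro m hm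
          exact (seidel_same2 hT hzv' (hB m hm)).mpr (h1 m hm)
      · rcases tourn_total hT (Ne.symm hzv) with hvz | hzv'
        · left; intro m hm
          exact (seidel_cross hT hvz (hB m hm)).mpr (h1 m hm)
        · right; intro m hm
          exact (seidel_same2 hT (hB m hm) hzv').mpr (h1 m hm)

lemma prime_of_seidel (hT : IsTournament r) (v : V)
    (hP : TournIsPrime (tournSeidel r v)) : TournIsPrime r := by
  intro M hM
  by_contra h
  push_neg at h
  obtain ⟨hne, hsing, huniv⟩ := h
  obtain ⟨a, ha⟩ := hne
  have hb : ∃ b ∈ M, b ≠ a := by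
    by_contra hb
    push_neg at hb
    exact hsing a (Set.eq_singleton_iff_unique_mem.mpr ⟨ha, hb⟩)
  obtain ⟨b, hb, hba⟩ := hb
  obtain ⟨M', hM', ⟨a', ha', b', hb', hab'⟩, hMu'⟩ :=
    module_transfer hT v hM ha hb (Ne.symm hba) huniv
  rcases hP M' hM' with h1 | ⟨x, h1⟩ | h1
  · exact (h1 ▸ ha' : a' ∈ (∅ : Set V))
  · apply hab'
    have h2 : a' ∈ ({x} : Set V) := h1 ▸ ha'
    have h3 : b' ∈ ({x} : Set V) := h1 ▸ hb'
    rw [Set.mem_singleton_iff] at h2 h3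
    rw [h2, h3]
  · exact hMu' h1

end SeidelHelpers

/-- A tournament `T` is prime w.r.t. modular decomposition iff `T*v` is. -/
theorem tournament_isPrime_seidel_iff {V : Type u} [Fintype V] (r : V → V → Prop)
    (hT : IsTournament r) (v : V) :
    TournIsPrime r ↔ TournIsPrime (tournSeidel r v) := by
  constructor
  · intro h
    exact prime_of_seidel (isTournament_seidel hT v) v
      (by rw [seidel_involutive hT v]; exact h)
  · intro h
    exact prime_of_seidel hT v h
end
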